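/- For any u ∈ H^1_0(Ω)^d, the EMAC trilinear form vanishes on the diagonal: c(u,u,u) = 0, where c(u,v,w) = 2(D(u)v, w) + ((∇·u)v, w). -/

import Mathlib

open MeasureTheory Finset

/-- Partial derivative ∂_j u_i at x. -/
noncomputable def pd {d : ℕ} (u : (Fin d → ℝ) → (Fin d → ℝ)) (j i : Fin d)
    (x : Fin d → ℝ) : ℝ := fderiv ℝ u x (Pi.single j 1) i

/-- Symmetric gradient D(u)_{ij} = (∂_j u_i + ∂_i u_j)/2. -/
noncomputable def symGrad {d : ℕ} (u : (Fin d → ℝ) → (Fin d → ℝ)) (i j : Fin d)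
    (x : Fin d → ℝ) : ℝ := (pd u j i x + pd u i j x) / 2

/-- Divergence ∇·u at x. -/
noncomputable def divg {d : ℕ} (u : (Fin d → ℝ) → (Fin d → ℝ)) (x : Fin d → ℝ) : ℝ :=
  ∑ i, pd u i i x

/-- EMAC trilinear form c(u,v,w) = 2(D(u)v, w) + ((∇·u)v, w) over Ω. -/
noncomputable def cform {d : ℕ} (Ω : Set (Fin d → ℝ))
    (u v w : (Fin d → ℝ) → (Fin d → ℝ)) : ℝ :=
  ∫ x in Ω, (2 * ∑ i, (∑ j, symGrad u i j x * v x j) * w x i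
      + divg u x * ∑ i, v x i * w x i)

private lemma alg_identity {d : ℕ} (a : Fin d → Fin d → ℝ) (b : Fin d → ℝ) :
    2 * ∑ i, (∑ j, ((a j i + a i j) / 2) * b j) * b i + (∑ i, a i i) * ∑ i, b i * b i
      = ∑ j, (b j * ∑ k, 2 * (b k * a j k) + (∑ k, b k * b k) * a j j) := by
  have swap : ∑ i, ∑ j, a j i * b j * b i = ∑ i, ∑ j, a i j * b i * b j := Finset.sum_comm
  have h1 : 2 * ∑ i, (∑ j, ((a j i + a i j) / 2) * b j) * b i
      = (∑ i, ∑ j, a j i * b j * b i) + ∑ i, ∑ j, a i j * b j * b i := by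
    rw [Finset.mul_sum, ← Finset.sum_add_distrib]
    refine Finset.sum_congr rfl fun i _ => ?_
    rw [Finset.sum_mul, Finset.mul_sum, ← Finset.sum_add_distrib]
    refine Finset.sum_congr rfl fun j _ => ?_
    ring
  rw [h1, swap, Finset.sum_mul, ← Finset.sum_add_distrib, ← Finset.sum_add_distrib]
  refine Finset.sum_congr rfl fun i _ => ?_
  have h2 : b i * ∑ k, 2 * (b k * a i k) = ∑ k, (a i k * b i * b k + a i k * b k * b i) := by
    rw [Finset.mul_sum]; exact Finset.sum_congr rfl fun k _ => by ring
  rw [h2, Finset.sum_add_distrib]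
  ring

theorem cform_diag_zero {d : ℕ} (hd : d = 2 ∨ d = 3) (Ω : Set (Fin d → ℝ))
    (hΩ : IsOpen Ω) (hΩb : Bornology.IsBounded Ω)
    (u : (Fin d → ℝ) → (Fin d → ℝ))
    (hu : ContDiff ℝ 1 u) (hus : HasCompactSupport u) (husupp : tsupport u ⊆ Ω) :
    cform Ω u u u = 0 := by
  classical
  have hud : Differentiable ℝ u := hu.differentiable one_ne_zero
  set S : (Fin d → ℝ) → ℝ := fun x => ∑ k, u x k * u x k with hSdef
  set G : Fin d → (Fin d → ℝ) → ℝ := fun j x => u x j * S x with hGdef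
  -- derivative of the components
  have hcomp : ∀ (j : Fin d) (x : Fin d → ℝ), HasFDerivAt (fun y => u y j)
      ((ContinuousLinearMap.proj j).comp (fderiv ℝ u x)) x :=
    by
    intro j x
    exact (ContinuousLinearMap.proj j).hasFDerivAt.comp x (hud x).hasFDerivAt
  -- derivative of S
  have hSd : ∀ x : Fin d → ℝ, HasFDerivAt S
      (∑ k, (u x k • ((ContinuousLinearMap.proj k).comp (fderiv ℝ u x))
        + u x k • ((ContinuousLinearMap.proj k).comp (fderiv ℝ u x)))) x :=
    fun x => HasFDerivAt.fun_sum (fun k _ => (hcomp k x).mul (hcomp k x))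
  -- derivative of G j
  have hGd : ∀ (j : Fin d) (x : Fin d → ℝ), HasFDerivAt (G j)
      (u x j • (∑ k, (u x k • ((ContinuousLinearMap.proj k).comp (fderiv ℝ u x))
          + u x k • ((ContinuousLinearMap.proj k).comp (fderiv ℝ u x))))
        + S x • ((ContinuousLinearMap.proj j).comp (fderiv ℝ u x))) x :=
    fun j x => (hcomp j x).mul (hSd x)
  -- value of the derivative of G j in direction e_j
  have hval : ∀ (j : Fin d) (x : Fin d → ℝ),
      fderiv ℝ (G j) x (Pi.single j 1)
        = u x j * ∑ k, 2 * (u x k * pd u j k x) + S x * pd u j j x := by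
    intro j x
    rw [(hGd j x).fderiv]
    simp only [ContinuousLinearMap.add_apply, ContinuousLinearMap.smul_apply,
      ContinuousLinearMap.coe_sum', Finset.sum_apply, ContinuousLinearMap.coe_comp',
      Function.comp_apply, ContinuousLinearMap.proj_apply, smul_eq_mul, pd]
    congr 1
    rw [Finset.mul_sum, Finset.mul_sum]
    exact Finset.sum_congr rfl fun k _ => by ring
  -- pointwise identity: integrand = divergence of G
  have key : ∀ x : Fin d → ℝ,
      2 * ∑ i, (∑ j, symGrad u i j x * u x j) * u x i + divg u x * ∑ i, u x i * u x i
        = ∑ j, fderiv ℝ (G j) x (Pi.single j 1) := by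
    intro x
    have := alg_identity (fun i j => pd u i j x) (fun i => u x i)
    simp only [symGrad, divg]
    rw [this]
    exact Finset.sum_congr rfl fun j _ => (hval j x).symm
  -- regularity of G j
  have hcj : ∀ j : Fin d, ContDiff ℝ 1 fun x => u x j :=
    fun j => (ContinuousLinearMap.proj j : (Fin d → ℝ) →L[ℝ] ℝ).contDiff.comp hu
  have hSc : ContDiff ℝ 1 S := ContDiff.sum fun k _ => (hcj k).mul (hcj k)
  have hGc : ∀ j : Fin d, ContDiff ℝ 1 (G j) := fun j => (hcj j).mul hSc
  have hGs : ∀ j : Fin d, HasCompactSupport (G j) := by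
    intro j
    refine hus.mono' (fun x hx => subset_closure (fun h0 => hx ?_))
    show u x j * S x = 0
    rw [h0]; simp [hSdef]
  -- integrability of the divergence terms
  have hint : ∀ j : Fin d, Integrable (fun x => fderiv ℝ (G j) x (Pi.single j 1)) volume := by
    intro j
    refine Continuous.integrable_of_hasCompactSupport ?_ ((hGs j).fderiv_apply ℝ _)
    exact ((hGc j).continuous_fderiv one_ne_zero).clm_apply continuous_const
  have hGint : ∀ j : Fin d, Integrable (G j) volume := fun j =>
    (hGc j).continuous.integrable_of_hasCompactSupport (hGs j)
  -- each ∫ ∂_j G_j = 0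
  have hzero : ∀ j : Fin d, ∫ x, fderiv ℝ (G j) x (Pi.single j 1) = 0 := by
    intro j
    have h := integral_mul_fderiv_eq_neg_fderiv_mul_of_integrable (μ := volume)
      (f := fun _ : Fin d → ℝ => (1 : ℝ)) (g := G j) (v := Pi.single j 1)
      ?_ ?_ ?_ (fun x _ => differentiableAt_const 1) (fun x _ => ((hGc j).differentiable one_ne_zero) x)
    · simpa [fderiv_const] using h
    · simp only [fderiv_fun_const]
      simpa using integrable_zero (Fin d → ℝ) ℝ volume
    · simpa using hint j
    · simpa using hGint j
  -- conclude
  unfold cform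
  rw [setIntegral_eq_integral_of_forall_compl_eq_zero]
  · rw [show (fun x => 2 * ∑ i, (∑ j, symGrad u i j x * u x j) * u x i
        + divg u x * ∑ i, u x i * u x i)
        = fun x => ∑ j, fderiv ℝ (G j) x (Pi.single j 1) from funext key]
    rw [integral_finset_sum _ (fun j _ => hint j)]
    exact Finset.sum_eq_zero fun j _ => hzero j
  · intro x hx
    have h0 : u x = 0 := image_eq_zero_of_notMem_tsupport (fun h => hx (husupp h))
    simp [h0]
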